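/- Let Δ be a near-cone with apex vertex a (i.e., whenever B ∈ Δ and w ∈ B, also (B\{w})∪{a} ∈ Δ). Then for every r and every vertex v of Δ, f_{r}(link(Δ, v)) ≤ f_{r}(link(Δ, a)). -/

import Mathlib

open Finset

/-- A (finite, abstract) simplicial complex: a nonempty collection of finite
sets closed under taking subsets. -/
def IsComplex {α : Type} [DecidableEq α] (Δ : Finset (Finset α)) : Prop :=
  Δ.Nonempty ∧ ∀ A ∈ Δ, ∀ B ⊆ A, B ∈ Δ

/-- The link of a face `S` in `Δ`. -/
def link {α : Type} [DecidableEq α] (Δ : Finset (Finset α)) (S : Finset α) :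
    Finset (Finset α) :=
  Δ.filter fun F => Disjoint F S ∧ F ∪ S ∈ Δ

/-- The deletion of a vertex `v` from `Δ`. -/
def del {α : Type} [DecidableEq α] (Δ : Finset (Finset α)) (v : α) :
    Finset (Finset α) :=
  Δ.filter fun F => v ∉ F

/-- A facet: a maximal face. -/
def IsFacet {α : Type} (Δ : Finset (Finset α)) (A : Finset α) : Prop :=
  A ∈ Δ ∧ ∀ B ∈ Δ, A ⊆ B → B = A

/-- Vertex-decomposability: `Δ` is a simplex, or has a shedding vertex `v`
(every face containing `v` admits an exchange) whose deletion and link are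
both vertex-decomposable. -/
inductive VertexDecomposable {α : Type} [DecidableEq α] :
    Finset (Finset α) → Prop
  | simplex (A : Finset α) : VertexDecomposable A.powerset
  | shed (Δ : Finset (Finset α)) (v : α)
      (hshed : ∀ A ∈ Δ, v ∈ A → ∃ w, w ≠ v ∧ w ∉ A ∧ insert w (A.erase v) ∈ Δ)
      (hdel : VertexDecomposable (del Δ v))
      (hlink : VertexDecomposable (link Δ {v})) :
      VertexDecomposable Δ


/-- **Link face numbers of near-cones are maximized at the apex.** If `Δ` is a
near-cone with apex vertex `a` (whenever `B ∈ Δ` and `w ∈ B`, also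
`(B \ {w}) ∪ {a} ∈ Δ`), then for every `r` and every vertex `v` of `Δ`, the
number of `r`-element faces of `link(Δ,v)` is at most that of `link(Δ,a)`. -/
theorem nearCone_link_face_numbers {α : Type} [DecidableEq α]
    (Δ : Finset (Finset α)) (hΔ : IsComplex Δ) (a : α)
    (hnc : ∀ B ∈ Δ, ∀ w ∈ B, insert a (B.erase w) ∈ Δ)
    (r : ℕ) (v : α) (hv : {v} ∈ Δ) :
    ((link Δ {v}).filter fun A => A.card = r).card ≤
      ((link Δ {a}).filter fun A => A.card = r).card := by
  rcases eq_or_ne v a with rfl | hva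
  · exact le_refl _
  apply Finset.card_le_card_of_injOn
    (fun F => if a ∈ F then insert v (F.erase a) else F)
  · intro F hF
    simp only [link, Finset.mem_coe, Finset.mem_filter, Finset.disjoint_singleton_right] at hF ⊢
    obtain ⟨⟨hFΔ, hvF, hFv⟩, hcard⟩ := hF
    have hun : ∀ (s : Finset α) (x : α), s ∪ {x} = insert x s := by
      intro s x; ext y; simp [or_comm]
    rw [hun] at hFv
    by_cases haF : a ∈ F
    · simp only [haF, if_pos]
      have hmem : a ∈ insert v F := Finset.mem_insert_of_mem haF
      have key : insert a ((insert v F).erase a) ∈ Δ := hnc _ hFv a hmem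
      rw [Finset.erase_insert_of_ne hva] at key
      rw [hun]
      refine ⟨⟨hΔ.2 _ key _ (Finset.subset_insert _ _), ?_, key⟩, ?_⟩
      · simp [hva.symm, Finset.mem_erase, Ne.symm hva]
      · rw [Finset.card_insert_of_notMem (fun h => hvF (Finset.mem_of_mem_erase h)),
          Finset.card_erase_of_mem haF,
          Nat.sub_add_cancel (Finset.card_pos.mpr ⟨a, haF⟩)]
        exact hcard
    · simp only [haF, if_neg, not_false_iff]
      have hmem : v ∈ insert v F := Finset.mem_insert_self _ _
      have key : insert a ((insert v F).erase v) ∈ Δ := hnc _ hFv v hmem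
      rw [Finset.erase_insert hvF] at key
      rw [hun]
      exact ⟨⟨hFΔ, trivial, key⟩, hcard⟩
  · intro F₁ h₁ F₂ h₂ heq
    simp only [link, Finset.coe_filter, Set.mem_setOf_eq, Finset.mem_filter,
      Finset.disjoint_singleton_right] at h₁ h₂
    obtain ⟨⟨_, hv₁, _⟩, _⟩ := h₁
    obtain ⟨⟨_, hv₂, _⟩, _⟩ := h₂
    simp only at heq
    by_cases h1 : a ∈ F₁ <;> by_cases h2 : a ∈ F₂ <;>
      simp only [h1, h2, if_pos, if_neg, not_false_iff] at heq
    · have : (insert v (F₁.erase a)).erase v = (insert v (F₂.erase a)).erase v := by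
        rw [heq]
      rw [Finset.erase_insert (fun h => hv₁ (Finset.mem_of_mem_erase h)),
        Finset.erase_insert (fun h => hv₂ (Finset.mem_of_mem_erase h))] at this
      have := congrArg (insert a) this
      rwa [Finset.insert_erase h1, Finset.insert_erase h2] at this
    · exact absurd (heq ▸ Finset.mem_insert_self v (F₁.erase a)) hv₂
    · exact absurd (heq ▸ Finset.mem_insert_self v (F₂.erase a)) hv₁
    · exact heq
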